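/- Let n ≥ 1 and let v : Fin n → ℝ × ℝ be vectors such that v i ≠ 0 for all i and no two are parallel (for i ≠ j there is no c : ℝ with v i = c • v j). Let Z = { ∑ i, t i • v i | t : Fin n → ℝ, ∀ i, 0 ≤ t i ∧ t i ≤ 1 } be the zonotope generated by v. Then the set of extreme points of Z (in the sense of convexity over ℝ) is finite and has exactly 2·n elements. (This is the geometric fact underlying the paper's counterexample: a planar zonotope generated by n pairwise non-parallel vectors is a polygon with 2n vertices, so its description size grows linearly in n.) -/

import Mathlib

open Finset

namespace ZonotopeAux

/-- Dot product on `ℝ × ℝ`. -/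
def dot (u w : ℝ × ℝ) : ℝ := u.1 * w.1 + u.2 * w.2

@[simp] lemma dot_zero_left (q : ℝ × ℝ) : dot 0 q = 0 := by simp [dot]

lemma dot_add_smul (u p q : ℝ × ℝ) (δ : ℝ) :
    dot (u + δ • p) q = dot u q + δ * dot p q := by
  simp [dot, Prod.fst_add, Prod.snd_add, Prod.smul_fst, Prod.smul_snd]; ring

lemma dot_neg_left (u q : ℝ × ℝ) : dot (-u) q = -dot u q := by simp [dot]; ring

lemma dot_smul_left (c : ℝ) (u q : ℝ × ℝ) : dot (c • u) q = c * dot u q := by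
  simp [dot, Prod.smul_fst, Prod.smul_snd]; ring

lemma dot_smul_right (c : ℝ) (u q : ℝ × ℝ) : dot u (c • q) = c * dot u q := by
  simp [dot, Prod.smul_fst, Prod.smul_snd]; ring

lemma dot_comb (b c : ℝ) (x y q : ℝ × ℝ) :
    dot (b • x + c • y) q = b * dot x q + c * dot y q := by
  simp [dot, Prod.fst_add, Prod.snd_add, Prod.smul_fst, Prod.smul_snd]; ring

lemma dot_comb_right (b c : ℝ) (u x y : ℝ × ℝ) :
    dot u (b • x + c • y) = b * dot u x + c * dot u y := by
  simp [dot, Prod.fst_add, Prod.snd_add, Prod.smul_fst, Prod.smul_snd]; ring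

lemma dot_self_pos {p : ℝ × ℝ} (hp : p ≠ 0) : 0 < dot p p := by
  rcases p with ⟨x, y⟩
  have : x ≠ 0 ∨ y ≠ 0 := by
    by_contra h
    push_neg at h
    exact hp (by simp [h.1, h.2, Prod.ext_iff])
  rcases this with h | h <;> · simp only [dot]; nlinarith [mul_self_pos.2 h, mul_self_nonneg x, mul_self_nonneg y]

lemma dot_sum {ι : Type*} (u : ℝ × ℝ) (s : Finset ι) (f : ι → ℝ × ℝ) :
    dot u (∑ i ∈ s, f i) = ∑ i ∈ s, dot u (f i) := by
  classical
  induction s using Finset.induction with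
  | empty => simp [dot]
  | insert _ _ h ih =>
      rw [Finset.sum_insert h, Finset.sum_insert h, ← ih]
      simp [dot, Prod.fst_add, Prod.snd_add]; ring

/-- rotation by 90 degrees -/
def J (p : ℝ × ℝ) : ℝ × ℝ := (-p.2, p.1)

@[simp] lemma dot_J_self (p : ℝ × ℝ) : dot (J p) p = 0 := by simp [dot, J]; ring

lemma parallel_of_dotJ_eq_zero {p q : ℝ × ℝ} (hp : p ≠ 0) (h : dot (J p) q = 0) :
    ∃ c : ℝ, q = c • p := by
  have h' : -p.2 * q.1 + p.1 * q.2 = 0 := h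
  have hp' : p.1 ≠ 0 ∨ p.2 ≠ 0 := by
    by_contra hc; push_neg at hc
    exact hp (by rcases p with ⟨a, b⟩; simp_all [Prod.ext_iff])
  rcases hp' with h1 | h2
  · refine ⟨q.1 / p.1, ?_⟩
    have : q.2 = q.1 / p.1 * p.2 := by field_simp; nlinarith
    rcases q with ⟨a, b⟩
    simp_all [Prod.ext_iff, Prod.smul_fst, Prod.smul_snd]
  · refine ⟨q.2 / p.2, ?_⟩
    have : q.1 = q.2 / p.2 * p.1 := by field_simp; nlinarith
    rcases q with ⟨a, b⟩
    simp_all [Prod.ext_iff, Prod.smul_fst, Prod.smul_snd]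

lemma eq_smul_J_of_dot_eq_zero {p u : ℝ × ℝ} (hp : p ≠ 0) (h : dot u p = 0) :
    ∃ c : ℝ, u = c • J p := by
  have h' : u.1 * p.1 + u.2 * p.2 = 0 := h
  have hp' : p.1 ≠ 0 ∨ p.2 ≠ 0 := by
    by_contra hc; push_neg at hc
    exact hp (by rcases p with ⟨a, b⟩; simp_all [Prod.ext_iff])
  rcases hp' with h1 | h2
  · refine ⟨u.2 / p.1, ?_⟩
    have : u.1 = u.2 / p.1 * (-p.2) := by field_simp; nlinarith
    rcases u with ⟨a, b⟩
    simp_all [Prod.ext_iff, Prod.smul_fst, Prod.smul_snd, J]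
  · refine ⟨-u.1 / p.2, ?_⟩
    have : u.2 = -u.1 / p.2 * p.1 := by field_simp; nlinarith
    rcases u with ⟨a, b⟩
    simp_all [Prod.ext_iff, Prod.smul_fst, Prod.smul_snd, J]


section Pat

variable {ι : Type*} [DecidableEq ι] (v : ι → ℝ × ℝ)

/-- `u` realizes the sign pattern `S` on the index set `I`. -/
def Good (I S : Finset ι) (u : ℝ × ℝ) : Prop :=
  ∀ i ∈ I, if i ∈ S then 0 < dot u (v i) else dot u (v i) < 0

/-- The achievable sign patterns on `I`. -/
def Pat (I : Finset ι) : Set (Finset ι) := {S | S ⊆ I ∧ ∃ u, Good v I S u}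

variable {v}

lemma Good.ne_zero {I S : Finset ι} {u : ℝ × ℝ} (h : Good v I S u) {i : ι} (hi : i ∈ I) :
    dot u (v i) ≠ 0 := by
  have := h i hi
  split at this <;> [exact ne_of_gt this; exact ne_of_lt this]

lemma sign_pres {x e : ℝ} (h : |e| < |x|) : (0 < x → 0 < x + e) ∧ (x < 0 → x + e < 0) := by
  constructor
  · intro hx
    rw [abs_of_pos hx] at h
    have := (abs_lt.1 h).1
    linarith
  · intro hx
    rw [abs_of_neg hx] at h
    have := (abs_lt.1 h).2
    linarith

lemma exists_pert (s : Finset ι) (hs : s.Nonempty) (u p : ℝ × ℝ)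
    (h : ∀ i ∈ s, dot u (v i) ≠ 0) :
    ∃ δ : ℝ, 0 < δ ∧ ∀ ε : ℝ, |ε| ≤ δ → ∀ i ∈ s, |ε * dot p (v i)| < |dot u (v i)| := by
  have hne : (s.image fun i => |dot u (v i)|).Nonempty := hs.image _
  have hne' : (s.image fun i => |dot p (v i)|).Nonempty := hs.image _
  set m := (s.image fun i => |dot u (v i)|).min' hne with hm_def
  set M := (s.image fun i => |dot p (v i)|).max' hne' with hM_def
  have hm : 0 < m := by
    obtain ⟨i, hi, hie⟩ := Finset.mem_image.1 ((s.image fun i => |dot u (v i)|).min'_mem hne)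
    rw [hm_def, ← hie]
    exact abs_pos.2 (h i hi)
  have hM0 : 0 ≤ M := by
    obtain ⟨i, hi⟩ := hs
    refine le_trans (abs_nonneg (dot p (v i))) ?_
    rw [hM_def]
    exact Finset.le_max' (s.image fun j => |dot p (v j)|) (|dot p (v i)|)
      (Finset.mem_image_of_mem _ hi)
  refine ⟨m / (2 * (M + 1)), by positivity, fun ε hε i hi => ?_⟩
  have h1 : |dot p (v i)| ≤ M := by
    rw [hM_def]
    exact Finset.le_max' (s.image fun j => |dot p (v j)|) (|dot p (v i)|)
      (Finset.mem_image_of_mem _ hi)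
  have h2 : m ≤ |dot u (v i)| := by
    rw [hm_def]
    exact Finset.min'_le (s.image fun j => |dot u (v j)|) (|dot u (v i)|)
      (Finset.mem_image_of_mem _ hi)
  have habs : |ε * dot p (v i)| = |ε| * |dot p (v i)| := abs_mul _ _
  rw [habs]
  have hεn : 0 ≤ |ε| := abs_nonneg _
  have hδpos : 0 < m / (2 * (M + 1)) := by positivity
  have hδM : m / (2 * (M + 1)) * (2 * (M + 1)) = m := div_mul_cancel₀ _ (by positivity)
  nlinarith [abs_nonneg (dot p (v i)),
    mul_le_mul hε h1 (abs_nonneg (dot p (v i))) (le_of_lt hδpos)]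

/-- perturbing the witness keeps the realized pattern on `s`. -/
lemma exists_good_pert (s : Finset ι) (hs : s.Nonempty) (S : Finset ι) (u p : ℝ × ℝ)
    (hgood : Good v s S u) :
    ∃ δ : ℝ, 0 < δ ∧ ∀ ε : ℝ, |ε| ≤ δ → Good v s S (u + ε • p) := by
  obtain ⟨δ, hδ, hb⟩ := exists_pert s hs u p (fun i hi => hgood.ne_zero hi)
  refine ⟨δ, hδ, fun ε hε i hi => ?_⟩
  have hpres := sign_pres (hb ε hε i hi)
  have hrw : dot (u + ε • p) (v i) = dot u (v i) + ε * dot p (v i) := dot_add_smul u p (v i) ε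
  have := hgood i hi
  by_cases hiS : i ∈ S
  · rw [if_pos hiS] at this ⊢
    rw [hrw]
    exact hpres.1 this
  · rw [if_neg hiS] at this ⊢
    rw [hrw]
    exact hpres.2 this

lemma pat_card (v : ι → ℝ × ℝ) (I : Finset ι) (hne : I.Nonempty) :
    (∀ i ∈ I, v i ≠ 0) →
    (∀ i ∈ I, ∀ j ∈ I, i ≠ j → ¬∃ c : ℝ, v i = c • v j) →
    (Pat v I).ncard = 2 * I.card := by
  classical
  induction hne using Finset.Nonempty.cons_induction with
  | singleton a =>
      intro h0 _
      have hva : v a ≠ 0 := h0 a (Finset.mem_singleton_self a)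
      have hps : Pat v {a} = {∅, {a}} := by
        apply Set.eq_of_subset_of_subset
        · rintro S ⟨hsub, -⟩
          rcases Finset.subset_singleton_iff.1 hsub with rfl | rfl
          · exact Set.mem_insert _ _
          · exact Set.mem_insert_of_mem _ rfl
        · rintro S hS
          rcases hS with rfl | rfl
          · refine ⟨Finset.empty_subset _, -(v a), fun i hi => ?_⟩
            rw [Finset.mem_singleton] at hi
            subst hi
            rw [if_neg (Finset.notMem_empty _), dot_neg_left]
            linarith [dot_self_pos hva]
          · refine ⟨le_refl _, v a, fun i hi => ?_⟩
            rw [Finset.mem_singleton] at hi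
            subst hi
            rw [if_pos (Finset.mem_singleton_self i)]
            exact dot_self_pos hva
      rw [hps, Set.ncard_pair (Ne.symm (Finset.singleton_ne_empty a)), Finset.card_singleton]
  | cons a s ha hs ih =>
      intro h0 hp
      set I := Finset.cons a s ha with hI
      have haI : a ∈ I := Finset.mem_cons_self a s
      have hsI : ∀ i ∈ s, i ∈ I := fun i hi => Finset.mem_cons_of_mem hi
      have hva : v a ≠ 0 := h0 a haI
      have h0s : ∀ i ∈ s, v i ≠ 0 := fun i hi => h0 i (hsI i hi)
      set Pp : Set (Finset ι) := {T | T ⊆ s ∧ ∃ u, Good v I (insert a T) u} with hPp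
      set Pm : Set (Finset ι) := {T | T ⊆ s ∧ ∃ u, Good v I T u} with hPm
      have hrestrict : ∀ (S : Finset ι) (u : ℝ × ℝ), Good v I S u → ∀ T : Finset ι,
          (∀ i ∈ s, (i ∈ T ↔ i ∈ S)) → Good v s T u := by
        intro S u hg T hT i hi
        have hgi := hg i (hsI i hi)
        by_cases hiT : i ∈ T
        · rw [if_pos hiT]
          rw [if_pos ((hT i hi).1 hiT)] at hgi
          exact hgi
        · rw [if_neg hiT]
          rw [if_neg (fun hiS => hiT ((hT i hi).2 hiS))] at hgi
          exact hgi
      have hPpB : Pp ⊆ Pat v s := by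
        rintro T ⟨hTs, u, hu⟩
        refine ⟨hTs, u, hrestrict _ u hu T fun i hi => ?_⟩
        have hia : i ≠ a := fun h => ha (h ▸ hi)
        simp [Finset.mem_insert, hia]
      have hPmB : Pm ⊆ Pat v s := by
        rintro T ⟨hTs, u, hu⟩
        exact ⟨hTs, u, hrestrict _ u hu T fun i hi => Iff.rfl⟩
      have hsurj : Pat v s ⊆ Pp ∪ Pm := by
        rintro T ⟨hTs, u, hu⟩
        have haT : a ∉ T := fun h => ha (hTs h)
        rcases lt_trichotomy (dot u (v a)) 0 with hlt | heq | hgt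
        · refine Or.inr ⟨hTs, u, fun i hi => ?_⟩
          rw [hI, Finset.mem_cons] at hi
          rcases hi with rfl | hi
          · rw [if_neg haT]
            exact hlt
          · exact hu i hi
        · obtain ⟨δ, hδ, hgp⟩ := exists_good_pert s hs T u (v a) hu
          refine Or.inl ⟨hTs, u + δ • v a, fun i hi => ?_⟩
          rw [hI, Finset.mem_cons] at hi
          rcases hi with rfl | hi
          · rw [if_pos (Finset.mem_insert_self i T), dot_add_smul, heq, zero_add]
            exact mul_pos hδ (dot_self_pos hva)
          · have hgi := hgp δ (by rw [abs_of_pos hδ]) i hi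
            have hia : i ≠ a := fun h => ha (h ▸ hi)
            by_cases hiT : i ∈ T
            · rw [if_pos (Finset.mem_insert_of_mem hiT)]
              rw [if_pos hiT] at hgi
              exact hgi
            · rw [if_neg (by simp [Finset.mem_insert, hia, hiT])]
              rw [if_neg hiT] at hgi
              exact hgi
        · refine Or.inl ⟨hTs, u, fun i hi => ?_⟩
          rw [hI, Finset.mem_cons] at hi
          rcases hi with rfl | hi
          · rw [if_pos (Finset.mem_insert_self i T)]
            exact hgt
          · have hgi := hu i hi
            have hia : i ≠ a := fun h => ha (h ▸ hi)
            by_cases hiT : i ∈ T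
            · rw [if_pos (Finset.mem_insert_of_mem hiT)]
              rw [if_pos hiT] at hgi
              exact hgi
            · rw [if_neg (by simp [Finset.mem_insert, hia, hiT])]
              rw [if_neg hiT] at hgi
              exact hgi
      set w : ℝ × ℝ := J (v a) with hw
      have hwa : dot w (v a) = 0 := dot_J_self (v a)
      have hwn : ∀ i ∈ s, dot w (v i) ≠ 0 := by
        intro i hi hzero
        have hia : i ≠ a := fun h => ha (h ▸ hi)
        exact hp i (hsI i hi) a haI hia (parallel_of_dotJ_eq_zero hva hzero)
      set Tp : Finset ι := s.filter (fun i => 0 < dot w (v i)) with hTp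
      set Tm : Finset ι := s.filter (fun i => dot w (v i) < 0) with hTm
      have hTps : Tp ⊆ s := Finset.filter_subset _ _
      have hTms : Tm ⊆ s := Finset.filter_subset _ _
      have hgoodTp : Good v s Tp w := by
        intro i hi
        by_cases hpos : 0 < dot w (v i)
        · rw [if_pos (show i ∈ Tp from Finset.mem_filter.2 ⟨hi, hpos⟩)]
          exact hpos
        · rw [if_neg (fun h : i ∈ Tp => hpos (Finset.mem_filter.1 h).2)]
          exact lt_of_le_of_ne (not_lt.1 hpos) (hwn i hi)
      have hgoodTm : Good v s Tm (-w) := by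
        intro i hi
        by_cases hneg : dot w (v i) < 0
        · rw [if_pos (show i ∈ Tm from Finset.mem_filter.2 ⟨hi, hneg⟩), dot_neg_left]
          linarith
        · rw [if_neg (fun h : i ∈ Tm => hneg (Finset.mem_filter.1 h).2), dot_neg_left]
          have hgt := lt_of_le_of_ne (not_lt.1 hneg) (Ne.symm (hwn i hi))
          linarith
      have hmemboth : ∀ (T : Finset ι) (u0 : ℝ × ℝ), T ⊆ s → Good v s T u0 →
          dot u0 (v a) = 0 → T ∈ Pp ∩ Pm := by
        intro T u0 hTs hg h0a
        obtain ⟨δ, hδ, hgp⟩ := exists_good_pert s hs T u0 (v a) hg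
        have haT : a ∉ T := fun h => ha (hTs h)
        constructor
        · refine ⟨hTs, u0 + δ • v a, fun i hi => ?_⟩
          rw [hI, Finset.mem_cons] at hi
          rcases hi with rfl | hi
          · rw [if_pos (Finset.mem_insert_self i T), dot_add_smul, h0a, zero_add]
            exact mul_pos hδ (dot_self_pos hva)
          · have hgi := hgp δ (by rw [abs_of_pos hδ]) i hi
            have hia : i ≠ a := fun h => ha (h ▸ hi)
            by_cases hiT : i ∈ T
            · rw [if_pos (Finset.mem_insert_of_mem hiT)]
              rw [if_pos hiT] at hgi
              exact hgi
            · rw [if_neg (by simp [Finset.mem_insert, hia, hiT])]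
              rw [if_neg hiT] at hgi
              exact hgi
        · refine ⟨hTs, u0 + (-δ) • v a, fun i hi => ?_⟩
          rw [hI, Finset.mem_cons] at hi
          rcases hi with rfl | hi
          · rw [if_neg haT, dot_add_smul, h0a, zero_add]
            have hprod := mul_pos hδ (dot_self_pos hva)
            linarith
          · have hgi := hgp (-δ) (by rw [abs_neg, abs_of_pos hδ]) i hi
            by_cases hiT : i ∈ T
            · rw [if_pos hiT] at hgi ⊢
              exact hgi
            · rw [if_neg hiT] at hgi ⊢
              exact hgi
      have hTpmem : Tp ∈ Pp ∩ Pm := hmemboth Tp w hTps hgoodTp hwa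
      have hTmmem : Tm ∈ Pp ∩ Pm :=
        hmemboth Tm (-w) hTms hgoodTm (by rw [dot_neg_left, hwa, neg_zero])
      have hinter : Pp ∩ Pm = {Tp, Tm} := by
        apply Set.eq_of_subset_of_subset
        · rintro T ⟨⟨hTs, u1, hu1⟩, ⟨-, u2, hu2⟩⟩
          have haT : a ∉ T := fun h => ha (hTs h)
          have hα : 0 < dot u1 (v a) := by
            have hu1a := hu1 a haI
            rw [if_pos (Finset.mem_insert_self a T)] at hu1a
            exact hu1a
          have hβ : dot u2 (v a) < 0 := by
            have hu2a := hu2 a haI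
            rw [if_neg haT] at hu2a
            exact hu2a
          set u0 : ℝ × ℝ := (-dot u2 (v a)) • u1 + dot u1 (v a) • u2 with hu0
          have h0a : dot u0 (v a) = 0 := by
            rw [hu0, dot_comb]
            ring
          have hsign : ∀ i ∈ s, if i ∈ T then 0 < dot u0 (v i) else dot u0 (v i) < 0 := by
            intro i hi
            have h1 := hu1 i (hsI i hi)
            have h2 := hu2 i (hsI i hi)
            have hia : i ≠ a := fun h => ha (h ▸ hi)
            have hiins : i ∈ insert a T ↔ i ∈ T := by simp [Finset.mem_insert, hia]
            by_cases hiT : i ∈ T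
            · rw [if_pos hiT]
              rw [if_pos (hiins.2 hiT)] at h1
              rw [if_pos hiT] at h2
              rw [hu0, dot_comb]
              nlinarith
            · rw [if_neg hiT]
              rw [if_neg (fun h => hiT (hiins.1 h))] at h1
              rw [if_neg hiT] at h2
              rw [hu0, dot_comb]
              nlinarith
          obtain ⟨c, hc⟩ := eq_smul_J_of_dot_eq_zero hva h0a
          obtain ⟨i0, hi0⟩ := hs
          have hc0 : c ≠ 0 := by
            intro hcz
            have hsg := hsign i0 hi0
            rw [hc, hcz, zero_smul, dot_zero_left] at hsg
            split at hsg <;> linarith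
          have hdc : ∀ i, dot u0 (v i) = c * dot w (v i) := by
            intro i
            rw [hc, hw, dot_smul_left]
          simp only [Set.mem_insert_iff, Set.mem_singleton_iff]
          rcases hc0.lt_or_gt with hcneg | hcpos
          · refine Or.inr (Finset.ext fun i => ?_)
            by_cases his : i ∈ s
            · have hsg := hsign i his
              constructor
              · intro hiT
                rw [if_pos hiT, hdc] at hsg
                exact Finset.mem_filter.2 ⟨his, by nlinarith⟩
              · intro hiTm
                by_contra hiT
                rw [if_neg hiT, hdc] at hsg
                have hlt := (Finset.mem_filter.1 hiTm).2
                nlinarith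
            · constructor
              · intro hiT
                exact absurd (hTs hiT) his
              · intro hiTm
                exact absurd (hTms hiTm) his
          · refine Or.inl (Finset.ext fun i => ?_)
            by_cases his : i ∈ s
            · have hsg := hsign i his
              constructor
              · intro hiT
                rw [if_pos hiT, hdc] at hsg
                exact Finset.mem_filter.2 ⟨his, by nlinarith⟩
              · intro hiTp
                by_contra hiT
                rw [if_neg hiT, hdc] at hsg
                have hgt := (Finset.mem_filter.1 hiTp).2
                nlinarith
            · constructor
              · intro hiT
                exact absurd (hTs hiT) his
              · intro hiTp
                exact absurd (hTps hiTp) his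
        · rintro T hT
          simp only [Set.mem_insert_iff, Set.mem_singleton_iff] at hT
          rcases hT with rfl | rfl
          · exact hTpmem
          · exact hTmmem
      have hTpTm : Tp ≠ Tm := by
        obtain ⟨i0, hi0⟩ := hs
        intro h
        rcases (hwn i0 hi0).lt_or_gt with hneg | hpos
        · have h1 : i0 ∈ Tm := Finset.mem_filter.2 ⟨hi0, hneg⟩
          have h2 : i0 ∉ Tp := fun hmem => absurd (Finset.mem_filter.1 hmem).2 (by linarith)
          exact h2 (h ▸ h1)
        · have h1 : i0 ∈ Tp := Finset.mem_filter.2 ⟨hi0, hpos⟩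
          have h2 : i0 ∉ Tm := fun hmem => absurd (Finset.mem_filter.1 hmem).2 (by linarith)
          exact h2 (h ▸ h1)
      have hA : Pat v I = (fun T => insert a T) '' Pp ∪ Pm := by
        apply Set.eq_of_subset_of_subset
        · rintro S ⟨hSI, u, hu⟩
          by_cases haS : a ∈ S
          · left
            refine ⟨S.erase a, ⟨?_, u, ?_⟩, Finset.insert_erase haS⟩
            · intro i hi
              have h1 := Finset.mem_of_mem_erase hi
              have h2 := Finset.ne_of_mem_erase hi
              have h3 := hSI h1
              rw [hI, Finset.mem_cons] at h3
              rcases h3 with rfl | h3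
              · exact absurd rfl h2
              · exact h3
            · rw [Finset.insert_erase haS]
              exact hu
          · right
            refine ⟨?_, u, hu⟩
            intro i hi
            have h3 := hSI hi
            rw [hI, Finset.mem_cons] at h3
            rcases h3 with rfl | h3
            · exact absurd hi haS
            · exact h3
        · rintro S (⟨T, ⟨hTs, u, hu⟩, rfl⟩ | ⟨hTs, u, hu⟩)
          · exact ⟨Finset.insert_subset_iff.2 ⟨haI, hTs.trans (Finset.subset_cons ha)⟩, u, hu⟩
          · exact ⟨hTs.trans (Finset.subset_cons ha), u, hu⟩
      have hfinB : (Pat v s).Finite :=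
        Set.Finite.subset s.powerset.finite_toSet
          (fun T hT => Finset.mem_coe.2 (Finset.mem_powerset.2 hT.1))
      have hfinPp : Pp.Finite := Set.Finite.subset hfinB hPpB
      have hfinPm : Pm.Finite := Set.Finite.subset hfinB hPmB
      have hdisj : Disjoint ((fun T => insert a T) '' Pp) Pm := by
        rw [Set.disjoint_left]
        rintro S ⟨T, hT, rfl⟩ hSm
        exact (fun h => ha (hSm.1 h)) (Finset.mem_insert_self a T)
      have hinj : Set.InjOn (fun T => insert a T) Pp := by
        intro T1 h1 T2 h2 he
        have h1a : a ∉ T1 := fun h => ha (h1.1 h)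
        have h2a : a ∉ T2 := fun h => ha (h2.1 h)
        have he2 := congrArg (fun S : Finset ι => Finset.erase S a) he
        simpa [Finset.erase_insert h1a, Finset.erase_insert h2a] using he2
      have hunion : Pp ∪ Pm = Pat v s :=
        Set.eq_of_subset_of_subset (Set.union_subset hPpB hPmB) hsurj
      have hcard2 : (Pp ∩ Pm).ncard = 2 := by
        rw [hinter]
        exact Set.ncard_pair hTpTm
      have key := Set.ncard_union_add_ncard_inter Pp Pm hfinPp hfinPm
      rw [hunion, hcard2] at key
      have himgcard : ((fun T => insert a T) '' Pp).ncard = Pp.ncard :=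
        Set.ncard_image_of_injOn hinj
      have hAcard : (Pat v I).ncard = Pp.ncard + Pm.ncard := by
        rw [hA, Set.ncard_union_eq hdisj (hfinPp.image _) hfinPm, himgcard]
      rw [hAcard, ← key, ih h0s (fun i hi j hj hij => hp i (hsI i hi) j (hsI j hj) hij)]
      rw [hI, Finset.card_cons]
      ring

end Pat

section Main

variable {n : ℕ}

/-- The zonotope generated by `v`. -/
def Zon (v : Fin n → ℝ × ℝ) : Set (ℝ × ℝ) :=
  { z : ℝ × ℝ | ∃ t : Fin n → ℝ, (∀ i, 0 ≤ t i ∧ t i ≤ 1) ∧ z = ∑ i, t i • v i }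

lemma not_extreme_of_frac (v : Fin n → ℝ × ℝ) (hv0 : ∀ i, v i ≠ 0)
    (t : Fin n → ℝ) (ht : ∀ i, 0 ≤ t i ∧ t i ≤ 1) (j : Fin n)
    (h0 : 0 < t j) (h1 : t j < 1) :
    (∑ i, t i • v i) ∉ Set.extremePoints ℝ (Zon v) := by
  classical
  intro hx
  set x := ∑ i, t i • v i with hxdef
  set ε := min (t j) (1 - t j) with hε
  have hεpos : 0 < ε := lt_min h0 (by linarith)
  have hε1 : ε ≤ t j := min_le_left _ _
  have hε2 : ε ≤ 1 - t j := min_le_right _ _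
  have hsum : ∀ c : ℝ, ∑ i, (Function.update t j c) i • v i = x + (c - t j) • v j := by
    intro c
    have hkey : ∑ i, (Function.update t j c) i • v i - ∑ i, t i • v i = (c - t j) • v j := by
      rw [← Finset.sum_sub_distrib]
      have hcongr : ∀ i ∈ Finset.univ,
          (Function.update t j c) i • v i - t i • v i
            = if i = j then (c - t j) • v j else 0 := by
        intro i _
        by_cases hij : i = j
        · subst hij
          rw [if_pos rfl, Function.update_self, ← sub_smul]
        · rw [if_neg hij, Function.update_of_ne hij, sub_self]
      rw [Finset.sum_congr rfl hcongr, Finset.sum_ite_eq' Finset.univ j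
        (fun _ => (c - t j) • v j), if_pos (Finset.mem_univ j)]
    have := hkey
    rw [← hxdef] at this
    linear_combination (norm := module) this
  have hmem : ∀ c : ℝ, 0 ≤ c → c ≤ 1 → (x + (c - t j) • v j) ∈ Zon v := by
    intro c hc0 hc1
    refine ⟨Function.update t j c, fun i => ?_, (hsum c).symm⟩
    by_cases hij : i = j
    · subst hij
      rw [Function.update_self]
      exact ⟨hc0, hc1⟩
    · rw [Function.update_of_ne hij]
      exact ht i
  have hx1 : x + (t j - ε - t j) • v j ∈ Zon v := hmem (t j - ε) (by linarith) (by linarith)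
  have hx2 : x + (t j + ε - t j) • v j ∈ Zon v := hmem (t j + ε) (by linarith) (by linarith)
  have hseg : x ∈ openSegment ℝ (x + (t j - ε - t j) • v j) (x + (t j + ε - t j) • v j) := by
    refine ⟨1 / 2, 1 / 2, by norm_num, by norm_num, by norm_num, ?_⟩
    module
  have heq := hx.2 hx1 hx2 hseg
  have hne : x + (t j - ε - t j) • v j ≠ x := by
    intro hcon
    have h0' : (t j - ε - t j) • v j = 0 := by
      have := congrArg (fun z => z - x) hcon
      simpa [add_sub_cancel_left] using this
    rcases smul_eq_zero.1 h0' with hcz | hvz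
    · have : ε = 0 := by linarith [hcz]
      linarith
    · exact hv0 j hvz
  exact hne heq

lemma extreme_of_good (v : Fin n → ℝ × ℝ) (S : Finset (Fin n)) (u : ℝ × ℝ)
    (hu : Good v Finset.univ S u) :
    (∑ i ∈ S, v i) ∈ Set.extremePoints ℝ (Zon v) := by
  classical
  set x := ∑ i ∈ S, v i with hx
  have hdx : dot u x = ∑ i, (if i ∈ S then dot u (v i) else 0) := by
    rw [hx, dot_sum, Finset.sum_ite_mem, Finset.univ_inter]
  have hmax : ∀ z ∈ Zon v, dot u z ≤ dot u x ∧ (dot u z = dot u x → z = x) := by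
    rintro z ⟨t, ht, rfl⟩
    have hdz : dot u (∑ i, t i • v i) = ∑ i, t i * dot u (v i) := by
      rw [dot_sum]
      exact Finset.sum_congr rfl fun i _ => dot_smul_right _ _ _
    have hterm : ∀ i ∈ Finset.univ,
        t i * dot u (v i) ≤ (if i ∈ S then dot u (v i) else 0) := by
      intro i _
      have hg := hu i (Finset.mem_univ i)
      by_cases hiS : i ∈ S
      · rw [if_pos hiS] at hg ⊢
        nlinarith [(ht i).2]
      · rw [if_neg hiS] at hg ⊢
        nlinarith [(ht i).1]
    constructor
    · rw [hdz, hdx]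
      exact Finset.sum_le_sum hterm
    · intro heq
      rw [hdz, hdx] at heq
      have hall := (Finset.sum_eq_sum_iff_of_le hterm).1 heq
      have hti : ∀ i, t i • v i = (if i ∈ S then v i else 0) := by
        intro i
        have hgi := hu i (Finset.mem_univ i)
        have heqi := hall i (Finset.mem_univ i)
        by_cases hiS : i ∈ S
        · rw [if_pos hiS] at hgi heqi ⊢
          have ht1 : t i = 1 := by
            have := mul_right_cancel₀ (ne_of_gt hgi) (by linarith [heqi] : t i * dot u (v i) = 1 * dot u (v i))
            linarith [this]
          rw [ht1, one_smul]
        · rw [if_neg hiS] at hgi heqi ⊢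
          have ht0 : t i = 0 := by
            by_contra htne
            have := mul_ne_zero htne (ne_of_lt hgi)
            rw [heqi] at this
            exact this rfl
          rw [ht0, zero_smul]
      calc ∑ i, t i • v i = ∑ i, (if i ∈ S then v i else 0) :=
              Finset.sum_congr rfl fun i _ => hti i
        _ = x := by rw [Finset.sum_ite_mem, Finset.univ_inter, hx]
  constructor
  · refine ⟨fun i => if i ∈ S then 1 else 0, fun i => ?_, ?_⟩
    · by_cases h : i ∈ S <;> simp [h]
    · have : ∀ i ∈ Finset.univ, (if i ∈ S then (1 : ℝ) else 0) • v i
          = (if i ∈ S then v i else 0) := by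
        intro i _
        by_cases h : i ∈ S <;> simp [h]
      rw [Finset.sum_congr rfl this, Finset.sum_ite_mem, Finset.univ_inter]
  · rintro x₁ hx₁ x₂ hx₂ ⟨a, b, hA, hB, hab, habx⟩
    have h1 := hmax x₁ hx₁
    have h2 := hmax x₂ hx₂
    have hcomb : dot u x = a * dot u x₁ + b * dot u x₂ := by
      rw [← habx, dot_comb_right]
    have e1 : dot u x₁ = dot u x := by
      by_contra hne1
      have hlt : dot u x₁ < dot u x := lt_of_le_of_ne h1.1 hne1
      have hlt1 : a * dot u x₁ < a * dot u x := mul_lt_mul_of_pos_left hlt hA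
      have hle2 : b * dot u x₂ ≤ b * dot u x := mul_le_mul_of_nonneg_left h2.1 hB.le
      have hsum : a * dot u x + b * dot u x = dot u x := by rw [← add_mul, hab, one_mul]
      linarith
    have e2 : dot u x₂ = dot u x := by
      by_contra hne2
      have hlt : dot u x₂ < dot u x := lt_of_le_of_ne h2.1 hne2
      have hlt2 : b * dot u x₂ < b * dot u x := mul_lt_mul_of_pos_left hlt hB
      have hle1 : a * dot u x₁ ≤ a * dot u x := mul_le_mul_of_nonneg_left h1.1 hA.le
      have hsum : a * dot u x + b * dot u x = dot u x := by rw [← add_mul, hab, one_mul]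
      linarith
    exact h1.2 e1

lemma extreme_subset (v : Fin n → ℝ × ℝ) (hv0 : ∀ i, v i ≠ 0)
    (hpar : ∀ i j, i ≠ j → ¬ ∃ c : ℝ, v i = c • v j) :
    Set.extremePoints ℝ (Zon v)
      ⊆ (fun S : Finset (Fin n) => ∑ i ∈ S, v i) '' (Pat v Finset.univ) := by
  classical
  rintro x hx
  obtain ⟨t, ht, hxt⟩ := hx.1
  have hbool : ∀ i, t i = 0 ∨ t i = 1 := by
    intro i
    by_contra hcon
    push_neg at hcon
    have hgt : 0 < t i := lt_of_le_of_ne (ht i).1 (Ne.symm hcon.1)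
    have hlt : t i < 1 := lt_of_le_of_ne (ht i).2 hcon.2
    exact not_extreme_of_frac v hv0 t ht i hgt hlt (hxt ▸ hx)
  set S : Finset (Fin n) := Finset.univ.filter (fun i => t i = 1) with hS
  have hmemS : ∀ i : Fin n, i ∈ S ↔ t i = 1 := by
    intro i
    rw [hS, Finset.mem_filter]
    simp
  have hxS : x = ∑ i ∈ S, v i := by
    have hcongr : ∀ i ∈ Finset.univ, t i • v i = (if i ∈ S then v i else 0) := by
      intro i _
      rcases hbool i with h | h
      · rw [if_neg (fun hmem => by rw [(hmemS i).1 hmem] at h; norm_num at h), h, zero_smul]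
      · rw [if_pos ((hmemS i).2 h), h, one_smul]
    rw [hxt, Finset.sum_congr rfl hcongr, Finset.sum_ite_mem, Finset.univ_inter]
  have hgood : ∃ u, Good v Finset.univ S u := by
    by_contra hno
    push_neg at hno
    set wv : Fin n → ℝ × ℝ := fun i => if i ∈ S then v i else -v i with hwv
    have hwv0 : ∀ i, wv i ≠ 0 := by
      intro i
      by_cases h : i ∈ S <;> simp [hwv, h, hv0 i]
    have hzero : (0 : ℝ × ℝ) ∈ convexHull ℝ (Set.range wv) := by
      by_contra h0
      obtain ⟨f, c, hfc, hcf⟩ := geometric_hahn_banach_point_closed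
        (convex_convexHull ℝ (Set.range wv)) ((Set.finite_range wv).isClosed_convexHull ℝ) h0
      have hf0 : f (0 : ℝ × ℝ) = 0 := map_zero f
      set u : ℝ × ℝ := (f (1, 0), f (0, 1)) with hu
      have hfu : ∀ q : ℝ × ℝ, dot u q = f q := by
        intro q
        have hq : q = q.1 • ((1 : ℝ), (0 : ℝ)) + q.2 • ((0 : ℝ), (1 : ℝ)) := by
          rw [Prod.ext_iff]
          simp
        have h2 : f q = q.1 * f (1, 0) + q.2 * f (0, 1) := by
          conv_lhs => rw [hq]
          rw [map_add, map_smul, map_smul]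
          simp [smul_eq_mul]
        rw [h2]
        simp only [dot, hu]
        ring
      refine hno u (fun i _ => ?_)
      have hwi : 0 < f (wv i) := by
        have := hcf (wv i) (subset_convexHull ℝ _ (Set.mem_range_self i))
        linarith [hfc, hf0]
      by_cases hiS : i ∈ S
      · rw [if_pos hiS, hfu]
        have : wv i = v i := by rw [hwv]; simp [hiS]
        rw [← this]
        exact hwi
      · rw [if_neg hiS, hfu]
        have hwvi : wv i = -v i := by rw [hwv]; simp [hiS]
        have : f (v i) = -f (wv i) := by rw [hwvi, map_neg, neg_neg]
        rw [this]
        linarith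
    have hrange : Set.range wv = ↑(Finset.univ.image wv) := by
      rw [Finset.coe_image, Finset.coe_univ, Set.image_univ]
    rw [hrange, Finset.convexHull_eq] at hzero
    obtain ⟨W, hW0, hW1, hWc⟩ := hzero
    have hinj : ∀ i ∈ (Finset.univ : Finset (Fin n)), ∀ j ∈ (Finset.univ : Finset (Fin n)),
        wv i = wv j → i = j := by
      intro i _ j _ hij
      by_contra hne
      apply hpar i j hne
      by_cases hiS : i ∈ S <;> by_cases hjS : j ∈ S
      · refine ⟨1, ?_⟩
        rw [one_smul]
        rw [hwv] at hij
        simpa [hiS, hjS] using hij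
      · refine ⟨-1, ?_⟩
        rw [neg_one_smul]
        rw [hwv] at hij
        simpa [hiS, hjS] using hij
      · refine ⟨-1, ?_⟩
        rw [neg_one_smul]
        rw [hwv] at hij
        simp only [if_neg hiS, if_pos hjS] at hij
        rw [← hij, neg_neg]
      · refine ⟨1, ?_⟩
        rw [one_smul]
        rw [hwv] at hij
        simp only [if_neg hiS, if_neg hjS] at hij
        exact neg_inj.1 hij
    have hsum1 : ∑ i, W (wv i) = 1 := by
      rw [← Finset.sum_image hinj]
      exact hW1
    have hsum0 : ∑ i, W (wv i) • wv i = 0 := by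
      have := Finset.sum_image (f := fun y => W y • y) hinj
      rw [← this]
      rw [Finset.centerMass_eq_of_sum_1 _ id hW1] at hWc
      simpa using hWc
    have hWnn : ∀ i : Fin n, 0 ≤ W (wv i) := fun i =>
      hW0 _ (Finset.mem_image_of_mem _ (Finset.mem_univ i))
    have hWle : ∀ i : Fin n, W (wv i) ≤ 1 := by
      intro i
      rw [← hsum1]
      exact Finset.single_le_sum (fun j _ => hWnn j) (Finset.mem_univ i)
    obtain ⟨j, hj⟩ : ∃ j, 0 < W (wv j) := by
      by_contra hall
      push_neg at hall
      have : ∑ i, W (wv i) = 0 :=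
        Finset.sum_eq_zero fun i _ => le_antisymm (hall i) (hWnn i)
      rw [hsum1] at this
      norm_num at this
    have hjlt : W (wv j) < 1 := by
      rcases lt_or_eq_of_le (hWle j) with h | h
      · exact h
      · exfalso
        have hrest : ∀ i, i ≠ j → W (wv i) = 0 := by
          intro i hij
          have herase := Finset.add_sum_erase Finset.univ (fun i => W (wv i)) (Finset.mem_univ j)
          have hz : ∑ i ∈ Finset.univ.erase j, W (wv i) = 0 := by
            linarith [herase, hsum1]
          exact (Finset.sum_eq_zero_iff_of_nonneg fun i _ => hWnn i).1 hz i
            (Finset.mem_erase.2 ⟨hij, Finset.mem_univ i⟩)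
        have : wv j = 0 := by
          have hsingle : ∑ i, W (wv i) • wv i = W (wv j) • wv j :=
            Finset.sum_eq_single j (fun i _ hij => by rw [hrest i hij, zero_smul])
              (fun habs => absurd (Finset.mem_univ j) habs)
          rw [hsum0, h, one_smul] at hsingle
          exact hsingle.symm
        exact hwv0 j this
    set t' : Fin n → ℝ := fun i => if i ∈ S then 1 - W (wv i) else W (wv i) with ht'
    have ht'b : ∀ i, 0 ≤ t' i ∧ t' i ≤ 1 := by
      intro i
      rw [ht']
      by_cases h : i ∈ S <;> simp only [if_pos, if_neg, h, if_true, if_false] <;>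
        constructor <;> linarith [hWnn i, hWle i]
    have hxt' : x = ∑ i, t' i • v i := by
      have hcongr : ∀ i ∈ Finset.univ,
          t' i • v i = (if i ∈ S then v i else 0) - W (wv i) • wv i := by
        intro i _
        rw [ht', hwv]
        by_cases h : i ∈ S
        · simp only [if_pos h]
          rw [sub_smul, one_smul]
        · simp only [if_neg h]
          rw [smul_neg]
          abel
      rw [Finset.sum_congr rfl hcongr, Finset.sum_sub_distrib, hsum0, sub_zero,
        Finset.sum_ite_mem, Finset.univ_inter, ← hxS]
    have hj0 : 0 < t' j := by
      rw [ht']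
      by_cases h : j ∈ S <;> simp only [if_pos, if_neg, h, if_true, if_false] <;> linarith
    have hj1 : t' j < 1 := by
      rw [ht']
      by_cases h : j ∈ S <;> simp only [if_pos, if_neg, h, if_true, if_false] <;> linarith
    have hxe := hx
    rw [hxt'] at hxe
    exact not_extreme_of_frac v hv0 t' ht'b j hj0 hj1 hxe
  obtain ⟨u, hu⟩ := hgood
  exact ⟨S, ⟨Finset.subset_univ S, u, hu⟩, hxS.symm⟩

lemma inj_on_pat (v : Fin n → ℝ × ℝ) :
    Set.InjOn (fun S : Finset (Fin n) => ∑ i ∈ S, v i) (Pat v Finset.univ) := by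
  classical
  rintro S1 ⟨-, u1, hu1⟩ S2 ⟨-, u2, hu2⟩ heq
  by_contra hne
  have hd : dot u1 (∑ i ∈ S1, v i) = dot u1 (∑ i ∈ S2, v i) := by
    simp only at heq
    rw [heq]
  rw [dot_sum, dot_sum] at hd
  have h1 : ∑ i ∈ S1 ∩ S2, dot u1 (v i) + ∑ i ∈ S1 \ S2, dot u1 (v i)
      = ∑ i ∈ S1, dot u1 (v i) := Finset.sum_inter_add_sum_sdiff S1 S2 _
  have h2 : ∑ i ∈ S2 ∩ S1, dot u1 (v i) + ∑ i ∈ S2 \ S1, dot u1 (v i)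
      = ∑ i ∈ S2, dot u1 (v i) := Finset.sum_inter_add_sum_sdiff S2 S1 _
  rw [Finset.inter_comm] at h2
  have hkey : ∑ i ∈ S1 \ S2, dot u1 (v i) = ∑ i ∈ S2 \ S1, dot u1 (v i) := by
    linarith
  have hpos : ∀ i ∈ S1 \ S2, 0 < dot u1 (v i) := by
    intro i hi
    have := hu1 i (Finset.mem_univ i)
    rw [if_pos (Finset.mem_sdiff.1 hi).1] at this
    exact this
  have hneg : ∀ i ∈ S2 \ S1, dot u1 (v i) < 0 := by
    intro i hi
    have := hu1 i (Finset.mem_univ i)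
    rw [if_neg (Finset.mem_sdiff.1 hi).2] at this
    exact this
  by_cases hd1 : (S1 \ S2).Nonempty
  · have hgt := Finset.sum_pos hpos hd1
    have hle : ∑ i ∈ S2 \ S1, dot u1 (v i) ≤ 0 :=
      Finset.sum_nonpos fun i hi => le_of_lt (hneg i hi)
    linarith
  · rw [Finset.not_nonempty_iff_eq_empty, Finset.sdiff_eq_empty_iff_subset] at hd1
    have hd2 : (S2 \ S1).Nonempty := by
      rw [Finset.nonempty_iff_ne_empty]
      intro hcon
      rw [Finset.sdiff_eq_empty_iff_subset] at hcon
      exact hne (Finset.Subset.antisymm hd1 hcon)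
    have hlt : ∑ i ∈ S2 \ S1, dot u1 (v i) < 0 := Finset.sum_neg hneg hd2
    have hge : 0 ≤ ∑ i ∈ S1 \ S2, dot u1 (v i) :=
      Finset.sum_nonneg fun i hi => le_of_lt (hpos i hi)
    linarith

end Main

end ZonotopeAux

/-- A planar zonotope generated by `n ≥ 1` nonzero, pairwise non-parallel vectors is a
polygon with exactly `2·n` vertices: its set of extreme points is finite of cardinality
`2·n`. -/
theorem zonotope_extremePoints_card (n : ℕ) (hn : 1 ≤ n) (v : Fin n → ℝ × ℝ)
    (hv0 : ∀ i, v i ≠ 0)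
    (hpar : ∀ i j, i ≠ j → ¬ ∃ c : ℝ, v i = c • v j) :
    (Set.extremePoints ℝ
        { z : ℝ × ℝ | ∃ t : Fin n → ℝ, (∀ i, 0 ≤ t i ∧ t i ≤ 1) ∧ z = ∑ i, t i • v i }).Finite ∧
    (Set.extremePoints ℝ
        { z : ℝ × ℝ | ∃ t : Fin n → ℝ, (∀ i, 0 ≤ t i ∧ t i ≤ 1) ∧ z = ∑ i, t i • v i }).ncard
      = 2 * n := by
  classical
  show (Set.extremePoints ℝ (ZonotopeAux.Zon v)).Finite ∧
    (Set.extremePoints ℝ (ZonotopeAux.Zon v)).ncard = 2 * n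
  have hnI : (Finset.univ : Finset (Fin n)).Nonempty :=
    ⟨⟨0, hn⟩, Finset.mem_univ _⟩
  have hEq : Set.extremePoints ℝ (ZonotopeAux.Zon v)
      = (fun S : Finset (Fin n) => ∑ i ∈ S, v i) '' (ZonotopeAux.Pat v Finset.univ) := by
    apply Set.eq_of_subset_of_subset
    · exact ZonotopeAux.extreme_subset v hv0 hpar
    · rintro x ⟨S, ⟨-, u, hu⟩, rfl⟩
      exact ZonotopeAux.extreme_of_good v S u hu
  have hPatFin : (ZonotopeAux.Pat v Finset.univ).Finite :=
    Set.Finite.subset Finset.univ.powerset.finite_toSet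
      (fun T hT => Finset.mem_coe.2 (Finset.mem_powerset.2 hT.1))
  constructor
  · rw [hEq]
    exact hPatFin.image _
  · rw [hEq, Set.ncard_image_of_injOn (ZonotopeAux.inj_on_pat v),
      ZonotopeAux.pat_card v Finset.univ hnI (fun i _ => hv0 i) (fun i _ j _ hij => hpar i j hij)]
    simp [Finset.card_univ]
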